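/- Let T be a T_7-free tournament and let z be any vertex of T. Then the set V_3(z) induces a T_5-free subtournament and is 2-in-dominated by V_2(z). -/

import Mathlib

/-- A tournament on vertex set `V`: an irreflexive relation such that for
all distinct `u, v` exactly one of `u→v` and `v→u` holds. -/
def IsTournament {V : Type*} (r : V → V → Prop) : Prop :=
  (∀ v, ¬ r v v) ∧ ∀ u v : V, u ≠ v → (r u v ↔ ¬ r v u)

/-- The restriction of `r` to the vertex set `X` is a transitive relation. -/
def TransOn {V : Type*} (r : V → V → Prop) (X : Finset V) : Prop :=
  ∀ x ∈ X, ∀ y ∈ X, ∀ z ∈ X, r x y → r y z → r x z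

/-- There is a directed walk of length `k` from `v` to `z`. -/
def ReachLen {V : Type*} (r : V → V → Prop) (v z : V) (k : ℕ) : Prop :=
  ∃ f : Fin (k + 1) → V, f 0 = v ∧ f (Fin.last k) = z ∧
    ∀ i : Fin k, r (f i.castSucc) (f i.succ)

/-- The layer `V_ℓ(z)`: vertices whose shortest directed path to `z` has length
exactly `ℓ - 1`. -/
def layer {V : Type*} (r : V → V → Prop) (z : V) (ℓ : ℕ) : Set V :=
  {v | ReachLen r v z (ℓ - 1) ∧ ∀ m < ℓ - 1, ¬ ReachLen r v z m}

/-- `Z` 2-in-dominates `S`: some subset `Z' ⊆ Z` with `|Z'| ≤ 2` in-dominates `S`,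
i.e. every `s ∈ S` has an arc `s → z'` to some `z' ∈ Z'`. -/
def TwoInDominates {V : Type*} (r : V → V → Prop) (Z S : Set V) : Prop :=
  ∃ Z' : Set V, Z' ⊆ Z ∧ Z'.ncard ≤ 2 ∧ ∀ s ∈ S, ∃ z' ∈ Z', r s z'

/-- The set `A` induces a `T_5`-free subtournament: every 5-element subset of `A`
contains a 4-element transitive subset. -/
def T5FreeOn {V : Type*} (r : V → V → Prop) (A : Set V) : Prop :=
  ∀ X : Finset V, (↑X : Set V) ⊆ A → X.card = 5 →
    ∃ Y ⊆ X, Y.card = 4 ∧ TransOn r Y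

/-- The tournament is `T_7`-free: every 7-element vertex subset contains a 5-element
transitive subset. -/
def T7Free {V : Type*} (r : V → V → Prop) : Prop :=
  ∀ Q : Finset V, Q.card = 7 → ∃ X ⊆ Q, X.card = 5 ∧ TransOn r X

section helpers
variable {V : Type*} {r : V → V → Prop} {u v w z s : V}

lemma tourn_asymm (hT : IsTournament r) (h1 : r u v) (h2 : r v u) : False := by
  by_cases h : u = v
  · exact hT.1 v (h ▸ h1)
  · exact ((hT.2 u v h).mp h1) h2

lemma tourn_ne (hT : IsTournament r) (h : r u v) : u ≠ v :=
  fun e => hT.1 v (e ▸ h)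

lemma tourn_total (hT : IsTournament r) (hne : u ≠ v) (h : ¬ r u v) : r v u := by
  by_contra h2
  exact h ((hT.2 u v hne).mpr h2)

lemma reachLen_zero : ReachLen r v z 0 ↔ v = z := by
  constructor
  · rintro ⟨f, h0, hl, -⟩
    rw [← h0, ← hl]
    rfl
  · rintro rfl
    exact ⟨fun _ => v, rfl, rfl, fun i => i.elim0⟩

lemma reachLen_one : ReachLen r v z 1 ↔ r v z := by
  constructor
  · rintro ⟨f, h0, hl, hs⟩
    have := hs 0
    rw [show (0 : Fin 1).castSucc = 0 from rfl, show (0 : Fin 1).succ = Fin.last 1 from rfl,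
      h0, hl] at this
    exact this
  · intro h
    refine ⟨![v, z], rfl, rfl, fun i => ?_⟩
    fin_cases i
    simpa using h

lemma mem_layer_two (hT : IsTournament r) : w ∈ layer r z 2 ↔ r w z := by
  constructor
  · rintro ⟨h1, -⟩
    exact reachLen_one.mp h1
  · intro h
    refine ⟨reachLen_one.mpr h, fun m hm => ?_⟩
    interval_cases m
    rw [reachLen_zero]
    exact tourn_ne hT h

lemma mem_layer_three (hT : IsTournament r) (h : s ∈ layer r z 3) :
    r z s ∧ ¬ r s z ∧ s ≠ z ∧ ∃ w, r s w ∧ r w z := by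
  obtain ⟨h2, hlt⟩ := h
  have hne : s ≠ z := fun e => (hlt 0 (by norm_num)) (reachLen_zero.mpr e)
  have hnsz : ¬ r s z := fun e => (hlt 1 (by norm_num)) (reachLen_one.mpr e)
  refine ⟨tourn_total hT hne hnsz, hnsz, hne, ?_⟩
  obtain ⟨f, h0, hl, hs⟩ := h2
  refine ⟨f 1, ?_, ?_⟩
  · have := hs 0
    rwa [show ((0 : Fin 2).castSucc) = 0 from rfl, h0] at this
  · have := hs 1
    rwa [show ((1 : Fin 2).succ) = Fin.last 2 from rfl, hl] at this

end helpers

section key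
variable {V : Type*} [DecidableEq V]

lemma key (r : V → V → Prop) (hT : IsTournament r) (h7 : T7Free r)
    (z a b c wa wb wc : V)
    (hwaz : r wa z) (hwbz : r wb z) (hwcz : r wc z)
    (hza : r z a) (hzb : r z b) (hzc : r z c)
    (hawa : r a wa) (hbwb : r b wb) (hcwc : r c wc)
    (hwab : r wa b) (hwac : r wa c)
    (hwba : r wb a) (hwbc : r wb c)
    (hwca : r wc a) (hwcb : r wc b) : False := by
  classical
  -- distinctness facts
  have nzwa : z ≠ wa := (tourn_ne hT hwaz).symm
  have nzwb : z ≠ wb := (tourn_ne hT hwbz).symm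
  have nzwc : z ≠ wc := (tourn_ne hT hwcz).symm
  have nza : z ≠ a := tourn_ne hT hza
  have nzb : z ≠ b := tourn_ne hT hzb
  have nzc : z ≠ c := tourn_ne hT hzc
  have nawa : a ≠ wa := tourn_ne hT hawa
  have nbwb : b ≠ wb := tourn_ne hT hbwb
  have ncwc : c ≠ wc := tourn_ne hT hcwc
  have nawb : a ≠ wb := (tourn_ne hT hwba).symm
  have nawc : a ≠ wc := (tourn_ne hT hwca).symm
  have nbwa : b ≠ wa := (tourn_ne hT hwab).symm
  have nbwc : b ≠ wc := (tourn_ne hT hwcb).symm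
  have ncwa : c ≠ wa := (tourn_ne hT hwac).symm
  have ncwb : c ≠ wb := (tourn_ne hT hwbc).symm
  have nab : a ≠ b := fun e => tourn_asymm hT hwab (e ▸ hawa)
  have nac : a ≠ c := fun e => tourn_asymm hT hwac (e ▸ hawa)
  have nbc : b ≠ c := fun e => tourn_asymm hT hwbc (e ▸ hbwb)
  have nwawb : wa ≠ wb := fun e => tourn_asymm hT hwba (e ▸ hawa)
  have nwawc : wa ≠ wc := fun e => tourn_asymm hT hwca (e ▸ hawa)
  have nwbwc : wb ≠ wc := fun e => tourn_asymm hT hwcb (e ▸ hbwb)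
  set P1 : Finset V := {a, wa} with hP1
  set P2 : Finset V := {b, wb} with hP2
  set P3 : Finset V := {c, wc} with hP3
  set Q : Finset V := insert z (P1 ∪ P2 ∪ P3) with hQ
  have hQcard : Q.card = 7 := by
    rw [hQ, hP1, hP2, hP3]
    rw [show ({a, wa} : Finset V) ∪ {b, wb} ∪ {c, wc}
        = insert a (insert wa (insert b (insert wb (insert c ({wc} : Finset V))))) by
      ext x; simp [Finset.mem_insert, Finset.mem_union]; tauto]
    rw [Finset.card_insert_of_notMem (by
      simp only [Finset.mem_insert, Finset.mem_singleton]; push_neg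
      exact ⟨nza, nzwa, nzb, nzwb, nzc, nzwc⟩)]
    rw [Finset.card_insert_of_notMem (by
      simp only [Finset.mem_insert, Finset.mem_singleton]; push_neg
      exact ⟨nawa, nab, nawb, nac, nawc⟩)]
    rw [Finset.card_insert_of_notMem (by
      simp only [Finset.mem_insert, Finset.mem_singleton]; push_neg
      exact ⟨nbwa.symm, nwawb, ncwa.symm, nwawc⟩)]
    rw [Finset.card_insert_of_notMem (by
      simp only [Finset.mem_insert, Finset.mem_singleton]; push_neg
      exact ⟨nbwb, nbc, nbwc⟩)]
    rw [Finset.card_insert_of_notMem (by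
      simp only [Finset.mem_insert, Finset.mem_singleton]; push_neg
      exact ⟨ncwb.symm, nwbwc⟩)]
    rw [Finset.card_insert_of_notMem (by
      simp only [Finset.mem_singleton]; exact ncwc)]
    simp
  obtain ⟨Y, hYQ, hY5, hYt⟩ := h7 Q hQcard
  -- contradiction helpers
  have H1 : ∀ x wx : V, x ∈ Y → wx ∈ Y → z ∈ Y →
      r z x → r x wx → r wx z → False := by
    intro x wx hx hwx hz h1 h2 h3
    exact tourn_asymm hT (hYt z hz x hx wx hwx h1 h2) h3
  have H2 : ∀ x wx y wy : V, x ∈ Y → wx ∈ Y → y ∈ Y → wy ∈ Y →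
      r x wx → r wx y → r y wy → r wy x → False := by
    intro x wx y wy hx hwx hy hwy h1 h2 h3 h4
    exact tourn_asymm hT (hYt x hx wx hwx y hy h1 h2) (hYt y hy wy hwy x hx h3 h4)
  -- cardinality bookkeeping
  have hsplit : (5 : ℕ) ≤ (Y ∩ {z}).card + ((Y ∩ P1).card + ((Y ∩ P2).card + (Y ∩ P3).card)) := by
    have hYeq : Y = (Y ∩ {z}) ∪ ((Y ∩ P1) ∪ ((Y ∩ P2) ∪ (Y ∩ P3))) := by
      ext x
      simp only [Finset.mem_union, Finset.mem_inter]
      constructor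
      · intro hx
        have := hYQ hx
        rw [hQ] at this
        simp only [Finset.mem_insert, Finset.mem_union, Finset.mem_singleton] at this
        rcases this with h | h | h
        · exact Or.inl ⟨hx, by simp [h]⟩
        · rcases h with h | h
          · exact Or.inr (Or.inl ⟨hx, h⟩)
          · exact Or.inr (Or.inr (Or.inl ⟨hx, h⟩))
        · exact Or.inr (Or.inr (Or.inr ⟨hx, h⟩))
      · rintro (⟨h, -⟩ | ⟨h, -⟩ | ⟨h, -⟩ | ⟨h, -⟩) <;> exact h
    calc (5 : ℕ) = Y.card := hY5.symm
    _ = ((Y ∩ {z}) ∪ ((Y ∩ P1) ∪ ((Y ∩ P2) ∪ (Y ∩ P3)))).card := by rw [← hYeq]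
    _ ≤ _ := by
        refine le_trans (Finset.card_union_le _ _) ?_
        gcongr
        refine le_trans (Finset.card_union_le _ _) ?_
        gcongr
        exact Finset.card_union_le _ _
  have hbz : (Y ∩ {z}).card ≤ 1 := le_trans (Finset.card_le_card Finset.inter_subset_right) (by simp)
  have hcP1 : P1.card = 2 := by rw [hP1]; exact Finset.card_pair nawa
  have hcP2 : P2.card = 2 := by rw [hP2]; exact Finset.card_pair nbwb
  have hcP3 : P3.card = 2 := by rw [hP3]; exact Finset.card_pair ncwc
  have hsub : ∀ P : Finset V, P.card = 2 → ¬ P ⊆ Y → (Y ∩ P).card ≤ 1 := by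
    intro P hP hns
    by_contra h
    push_neg at h
    have h2 : (Y ∩ P).card = 2 := le_antisymm (by
      calc (Y ∩ P).card ≤ P.card := Finset.card_le_card Finset.inter_subset_right
      _ = 2 := hP) h
    have heq : Y ∩ P = P := Finset.eq_of_subset_of_card_le Finset.inter_subset_right (by omega)
    exact hns (heq ▸ Finset.inter_subset_left)
  have hmem : ∀ x wx : V, ({x, wx} : Finset V) ⊆ Y → x ∈ Y ∧ wx ∈ Y := by
    intro x wx h
    exact ⟨h (by simp), h (by simp)⟩
  by_cases hp1 : P1 ⊆ Y <;> by_cases hp2 : P2 ⊆ Y <;> by_cases hp3 : P3 ⊆ Y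
  · obtain ⟨ha, hwa⟩ := hmem a wa hp1
    obtain ⟨hb, hwb⟩ := hmem b wb hp2
    exact H2 a wa b wb ha hwa hb hwb hawa hwab hbwb hwba
  · obtain ⟨ha, hwa⟩ := hmem a wa hp1
    obtain ⟨hb, hwb⟩ := hmem b wb hp2
    exact H2 a wa b wb ha hwa hb hwb hawa hwab hbwb hwba
  · obtain ⟨ha, hwa⟩ := hmem a wa hp1
    obtain ⟨hc, hwc⟩ := hmem c wc hp3
    exact H2 a wa c wc ha hwa hc hwc hawa hwac hcwc hwca
  · -- only P1
    have h2 := hsub P2 hcP2 hp2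
    have h3 := hsub P3 hcP3 hp3
    have h1 : (Y ∩ P1).card ≤ 2 := le_trans (Finset.card_le_card Finset.inter_subset_right) (by omega)
    have hz : z ∈ Y := by
      by_contra hz
      have : Y ∩ {z} = ∅ := by
        ext x
        simp only [Finset.mem_inter, Finset.mem_singleton, Finset.notMem_empty, iff_false,
          not_and]
        rintro hx rfl
        exact hz hx
      rw [this] at hsplit
      simp at hsplit
      omega
    obtain ⟨ha, hwa⟩ := hmem a wa hp1
    exact H1 a wa ha hwa hz hza hawa hwaz
  · obtain ⟨hb, hwb⟩ := hmem b wb hp2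
    obtain ⟨hc, hwc⟩ := hmem c wc hp3
    exact H2 b wb c wc hb hwb hc hwc hbwb hwbc hcwc hwcb
  · -- only P2
    have h1 := hsub P1 hcP1 hp1
    have h3 := hsub P3 hcP3 hp3
    have hz : z ∈ Y := by
      by_contra hz
      have : Y ∩ {z} = ∅ := by
        ext x
        simp only [Finset.mem_inter, Finset.mem_singleton, Finset.notMem_empty, iff_false,
          not_and]
        rintro hx rfl
        exact hz hx
      rw [this] at hsplit
      simp at hsplit
      have h2 : (Y ∩ P2).card ≤ 2 := le_trans (Finset.card_le_card Finset.inter_subset_right) (by omega)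
      omega
    obtain ⟨hb, hwb⟩ := hmem b wb hp2
    exact H1 b wb hb hwb hz hzb hbwb hwbz
  · -- only P3
    have h1 := hsub P1 hcP1 hp1
    have h2 := hsub P2 hcP2 hp2
    have hz : z ∈ Y := by
      by_contra hz
      have : Y ∩ {z} = ∅ := by
        ext x
        simp only [Finset.mem_inter, Finset.mem_singleton, Finset.notMem_empty, iff_false,
          not_and]
        rintro hx rfl
        exact hz hx
      rw [this] at hsplit
      simp at hsplit
      have h3 : (Y ∩ P3).card ≤ 2 := le_trans (Finset.card_le_card Finset.inter_subset_right) (by omega)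
      omega
    obtain ⟨hc, hwc⟩ := hmem c wc hp3
    exact H1 c wc hc hwc hz hzc hcwc hwcz
  · -- none
    have h1 := hsub P1 hcP1 hp1
    have h2 := hsub P2 hcP2 hp2
    have h3 := hsub P3 hcP3 hp3
    omega

end key

section main
variable {V : Type*} [Fintype V] [DecidableEq V]

lemma L1a (r : V → V → Prop) (hT : IsTournament r) (h7 : T7Free r) (z w : V)
    (hwz : r w z) (X : Finset V) (hX : (↑X : Set V) ⊆ layer r z 3) (hX5 : X.card = 5)
    (hno : ¬ ∃ Y ⊆ X, Y.card = 4 ∧ TransOn r Y)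
    (A : Finset V) (hAX : A ⊆ X) (hAw : ∀ x ∈ A, r x w) :
    A.card ≤ 2 := by
  classical
  by_contra hA
  push_neg at hA
  have hzX : z ∉ X := fun h => ((mem_layer_three hT (hX h)).2.2.1) rfl
  have hwX : w ∉ X := fun h => ((mem_layer_three hT (hX h)).2.1) hwz
  have hzw : z ≠ w := (tourn_ne hT hwz).symm
  set Q : Finset V := insert z (insert w X) with hQ
  have hQcard : Q.card = 7 := by
    rw [hQ, Finset.card_insert_of_notMem (by
      simp only [Finset.mem_insert]; push_neg; exact ⟨hzw, hzX⟩),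
      Finset.card_insert_of_notMem hwX, hX5]
  obtain ⟨Y, hYQ, hY5, hYt⟩ := h7 Q hQcard
  have hsd : Y \ X ⊆ {z, w} := by
    intro y hy
    rw [Finset.mem_sdiff] at hy
    have := hYQ hy.1
    rw [hQ] at this
    simp only [Finset.mem_insert] at this ⊢
    simp only [Finset.mem_singleton]
    rcases this with h | h | h
    · exact Or.inl h
    · exact Or.inr h
    · exact absurd h hy.2
  have hcard_inter : 3 ≤ (Y ∩ X).card := by
    have h1 : (Y ∩ X).card + (Y \ X).card = Y.card := Finset.card_inter_add_card_sdiff Y X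
    have h2 : (Y \ X).card ≤ 2 := le_trans (Finset.card_le_card hsd) (by rw [Finset.card_pair hzw])
    omega
  rcases Nat.lt_or_ge (Y ∩ X).card 4 with hlt | hge
  · -- card = 3, so z, w ∈ Y
    have h1 : (Y ∩ X).card + (Y \ X).card = Y.card := Finset.card_inter_add_card_sdiff Y X
    have h2 : (Y \ X).card = 2 := by
      have := le_trans (Finset.card_le_card hsd) (le_of_eq (Finset.card_pair hzw))
      omega
    have hsdeq : Y \ X = {z, w} := Finset.eq_of_subset_of_card_le hsd (by
      rw [h2, Finset.card_pair hzw])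
    have hzY : z ∈ Y := by
      have : z ∈ Y \ X := by rw [hsdeq]; simp
      exact (Finset.mem_sdiff.mp this).1
    have hwY : w ∈ Y := by
      have : w ∈ Y \ X := by rw [hsdeq]; simp
      exact (Finset.mem_sdiff.mp this).1
    -- every x ∈ Y ∩ X is beaten by w
    have hwbeats : ∀ x ∈ Y ∩ X, r w x := by
      intro x hx
      rw [Finset.mem_inter] at hx
      have hzx : r z x := (mem_layer_three hT (hX hx.2)).1
      exact hYt w hwY z hzY x hx.1 hwz hzx
    -- A and Y ∩ X are disjoint subsets of X
    have hdisj : Disjoint A (Y ∩ X) := by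
      rw [Finset.disjoint_left]
      intro x hx hx2
      exact tourn_asymm hT (hAw x hx) (hwbeats x hx2)
    have : A.card + (Y ∩ X).card ≤ X.card := by
      rw [← Finset.card_union_of_disjoint hdisj]
      exact Finset.card_le_card (Finset.union_subset hAX Finset.inter_subset_right)
    omega
  · -- transitive 4-subset of X
    obtain ⟨Y', hY'sub, hY'card⟩ := Finset.exists_subset_card_eq (s := Y ∩ X) (n := 4) hge
    refine hno ⟨Y', le_trans hY'sub Finset.inter_subset_right, hY'card, ?_⟩
    intro x hx y hy u hu h1 h2
    have hm : ∀ t ∈ Y', t ∈ Y := fun t ht => (Finset.mem_inter.mp (hY'sub ht)).1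
    exact hYt x (hm x hx) y (hm y hy) u (hm u hu) h1 h2

end main

section part2
variable {V : Type*} [Fintype V] [DecidableEq V]

lemma part2 (r : V → V → Prop) (hT : IsTournament r) (h7 : T7Free r) (z : V) :
    TwoInDominates r (layer r z 2) (layer r z 3) := by
  classical
  by_cases hemp : ∀ s, s ∉ layer r z 3
  · exact ⟨∅, Set.empty_subset _, by simp, fun s hs => absurd hs (hemp s)⟩
  push_neg at hemp
  obtain ⟨s0, hs0⟩ := hemp
  obtain ⟨-, -, -, w0, hs0w0, hw0z⟩ := mem_layer_three hT hs0
  set WF : Finset V := Finset.univ.filter (fun w => r w z) with hWF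
  have hw0WF : w0 ∈ WF := by simp [hWF, hw0z]
  set S3 : Finset V := Finset.univ.filter (fun s => s ∈ layer r z 3) with hS3
  set F : V → V → Finset V := fun w1 w2 => S3.filter (fun s => r w1 s ∧ r w2 s) with hF
  have hP : (WF ×ˢ WF).Nonempty := ⟨(w0, w0), Finset.mem_product.mpr ⟨hw0WF, hw0WF⟩⟩
  obtain ⟨p, hpmem, hpmin⟩ := Finset.exists_min_image (WF ×ˢ WF) (fun p => (F p.1 p.2).card) hP
  obtain ⟨w1, w2⟩ := p
  rw [Finset.mem_product] at hpmem
  obtain ⟨hw1, hw2⟩ := hpmem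
  have hw1z : r w1 z := (Finset.mem_filter.mp hw1).2
  have hw2z : r w2 z := (Finset.mem_filter.mp hw2).2
  by_cases hzero : F w1 w2 = ∅
  · -- {w1, w2} 2-in-dominates
    refine ⟨{w1, w2}, ?_, ?_, ?_⟩
    · intro x hx
      simp only [Set.mem_insert_iff, Set.mem_singleton_iff] at hx
      rcases hx with rfl | rfl
      · exact (mem_layer_two hT).mpr hw1z
      · exact (mem_layer_two hT).mpr hw2z
    · exact le_trans (Set.ncard_insert_le _ _) (by simp)
    · intro s hs
      have hsS3 : s ∈ S3 := by simp [hS3, hs]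
      have hns : ¬ (r w1 s ∧ r w2 s) := by
        intro h
        have : s ∈ F w1 w2 := by
          rw [hF]; exact Finset.mem_filter.mpr ⟨hsS3, h⟩
        rw [hzero] at this
        exact absurd this (Finset.notMem_empty s)
      have hsnz : ¬ r s z := (mem_layer_three hT hs).2.1
      have hne1 : s ≠ w1 := fun e => hsnz (e ▸ hw1z)
      have hne2 : s ≠ w2 := fun e => hsnz (e ▸ hw2z)
      by_cases h1 : r w1 s
      · have h2 : ¬ r w2 s := fun h2 => hns ⟨h1, h2⟩
        exact ⟨w2, by simp, tourn_total hT hne2.symm h2⟩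
      · exact ⟨w1, by simp, tourn_total hT hne1.symm h1⟩
  · -- build the key configuration
    obtain ⟨s, hsmem⟩ := Finset.nonempty_iff_ne_empty.mpr hzero
    rw [hF, Finset.mem_filter] at hsmem
    obtain ⟨hsS3, hw1s, hw2s⟩ := hsmem
    have hs3 : s ∈ layer r z 3 := (Finset.mem_filter.mp hsS3).2
    obtain ⟨hzs, hsnz, -, w3, hsw3, hw3z⟩ := mem_layer_three hT hs3
    have hw3WF : w3 ∈ WF := by simp [hWF, hw3z]
    have hw3s : ¬ r w3 s := fun h => tourn_asymm hT hsw3 h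
    -- s' : beaten by w1, w3, beats w2
    have hs' : ∃ s', s' ∈ S3 ∧ r w1 s' ∧ r w3 s' ∧ ¬ r w2 s' := by
      by_contra hcon
      push_neg at hcon
      have hsubF : F w1 w3 ⊆ (F w1 w2).erase s := by
        intro t ht
        rw [hF, Finset.mem_filter] at ht
        obtain ⟨htS3, h1t, h3t⟩ := ht
        have h2t : r w2 t := hcon t htS3 h1t h3t
        refine Finset.mem_erase.mpr ⟨?_, ?_⟩
        · rintro rfl; exact hw3s h3t
        · rw [hF]; exact Finset.mem_filter.mpr ⟨htS3, h1t, h2t⟩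
      have hlt : (F w1 w3).card < (F w1 w2).card := by
        calc (F w1 w3).card ≤ ((F w1 w2).erase s).card := Finset.card_le_card hsubF
        _ < (F w1 w2).card := Finset.card_erase_lt_of_mem (by
            rw [hF]; exact Finset.mem_filter.mpr ⟨hsS3, hw1s, hw2s⟩)
      have := hpmin (w1, w3) (Finset.mem_product.mpr ⟨hw1, hw3WF⟩)
      simp only at this
      omega
    -- s'' : beaten by w2, w3, beats w1
    have hs'' : ∃ s'', s'' ∈ S3 ∧ r w2 s'' ∧ r w3 s'' ∧ ¬ r w1 s'' := by
      by_contra hcon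
      push_neg at hcon
      have hsubF : F w2 w3 ⊆ (F w1 w2).erase s := by
        intro t ht
        rw [hF, Finset.mem_filter] at ht
        obtain ⟨htS3, h2t, h3t⟩ := ht
        have h1t : r w1 t := hcon t htS3 h2t h3t
        refine Finset.mem_erase.mpr ⟨?_, ?_⟩
        · rintro rfl; exact hw3s h3t
        · rw [hF]; exact Finset.mem_filter.mpr ⟨htS3, h1t, h2t⟩
      have hlt : (F w2 w3).card < (F w1 w2).card := by
        calc (F w2 w3).card ≤ ((F w1 w2).erase s).card := Finset.card_le_card hsubF
        _ < (F w1 w2).card := Finset.card_erase_lt_of_mem (by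
            rw [hF]; exact Finset.mem_filter.mpr ⟨hsS3, hw1s, hw2s⟩)
      have := hpmin (w2, w3) (Finset.mem_product.mpr ⟨hw2, hw3WF⟩)
      simp only at this
      omega
    obtain ⟨s', hs'S3, hw1s', hw3s', hnw2s'⟩ := hs'
    obtain ⟨s'', hs''S3, hw2s'', hw3s'', hnw1s''⟩ := hs''
    have hs'3 : s' ∈ layer r z 3 := (Finset.mem_filter.mp hs'S3).2
    have hs''3 : s'' ∈ layer r z 3 := (Finset.mem_filter.mp hs''S3).2
    obtain ⟨hzs', hs'nz, -, -⟩ := mem_layer_three hT hs'3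
    obtain ⟨hzs'', hs''nz, -, -⟩ := mem_layer_three hT hs''3
    have hne2' : w2 ≠ s' := fun e => hs'nz (e ▸ hw2z)
    have hne1'' : w1 ≠ s'' := fun e => hs''nz (e ▸ hw1z)
    have hs'w2 : r s' w2 := tourn_total hT hne2' hnw2s'
    have hs''w1 : r s'' w1 := tourn_total hT hne1'' hnw1s''
    exact absurd (key r hT h7 z s s' s'' w3 w2 w1
      hw3z hw2z hw1z hzs hzs' hzs'' hsw3 hs'w2 hs''w1
      hw3s' hw3s'' hw2s hw2s'' hw1s hw1s') (fun h => h)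

end part2

/-- in a `T_7`-free tournament, for every vertex `z`, the set `V_3(z)`
induces a `T_5`-free subtournament and is 2-in-dominated by `V_2(z)`. -/
theorem stmt10 {V : Type*} [Fintype V] [DecidableEq V]
    (r : V → V → Prop) (hT : IsTournament r) (h7 : T7Free r) (z : V) :
    T5FreeOn r (layer r z 3) ∧ TwoInDominates r (layer r z 2) (layer r z 3) := by
  classical
  have hdom := part2 r hT h7 z
  refine ⟨?_, hdom⟩
  intro X hXsub hX5
  by_contra hno
  obtain ⟨Z', hZsub, hZcard, hZcov⟩ := hdom
  have hfin : Z'.Finite := Set.toFinite Z'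
  set ZF := hfin.toFinset with hZF
  have hZFcard : ZF.card ≤ 2 := by
    rw [hZF, ← Set.ncard_eq_toFinset_card Z' hfin]
    exact hZcard
  have hcover : X ⊆ ZF.biUnion (fun w => X.filter (fun x => r x w)) := by
    intro x hx
    obtain ⟨z', hz', hr⟩ := hZcov x (hXsub hx)
    exact Finset.mem_biUnion.mpr ⟨z', hfin.mem_toFinset.mpr hz', Finset.mem_filter.mpr ⟨hx, hr⟩⟩
  have hle1 : X.card ≤ (ZF.biUnion (fun w => X.filter (fun x => r x w))).card :=
    Finset.card_le_card hcover
  have hle2 : (ZF.biUnion (fun w => X.filter (fun x => r x w))).card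
      ≤ ∑ w ∈ ZF, (X.filter (fun x => r x w)).card := Finset.card_biUnion_le
  have hle3 : ∑ w ∈ ZF, (X.filter (fun x => r x w)).card ≤ ZF.card * 2 := by
    rw [← smul_eq_mul]
    refine Finset.sum_le_card_nsmul ZF _ 2 (fun w hw => ?_)
    have hwz : r w z := (mem_layer_two hT).mp (hZsub (hfin.mem_toFinset.mp hw))
    exact L1a r hT h7 z w hwz X hXsub hX5 hno (X.filter (fun x => r x w))
      (Finset.filter_subset _ _) (fun x hx => (Finset.mem_filter.mp hx).2)
  omega
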